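/- Let F be a field, S a subgroup of F^×, and a, b ∈ F^× with aS = -bS (i.e., ab⁻¹ ∈ -S). Then b·S = (1-a)(1-a⁻¹)⁻¹·S whenever a ≠ 1; consequently, in the Milnor K-group modulo S, every pure tensor a₁S ⊗ ... ⊗ aₙS with aᵢS = -aⱼS for some i < j lies in the Steinberg subgroup St_n(S). -/

import Mathlib

open scoped TensorProduct

variable {F : Type*} [Field F]

instance (S : Subgroup Fˣ) : Module ℤ (Additive (Fˣ ⧸ S)) :=
  AddCommGroup.toIntModule (Additive (Fˣ ⧸ S))

/-- The `n`-fold tensor power `(F^×/S)^{⊗n}` (written additively, over `ℤ`). -/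
abbrev TensorPowerModS (S : Subgroup Fˣ) (n : ℕ) : Type _ :=
  PiTensorProduct ℤ (fun _ : Fin n => Additive (Fˣ ⧸ S))

/-- The pure tensor `a₁S ⊗ ⋯ ⊗ aₙS`. -/
noncomputable def pureTensorModS (S : Subgroup Fˣ) {n : ℕ} (a : Fin n → Fˣ) :
    TensorPowerModS S n :=
  PiTensorProduct.tprod ℤ (fun i => Additive.ofMul (QuotientGroup.mk (a i) : Fˣ ⧸ S))

/-- The Steinberg condition modulo `S`: `1 ∈ aS + bS`. -/
def SteinbergRel (S : Subgroup Fˣ) (a b : Fˣ) : Prop :=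
  ∃ s t : Fˣ, s ∈ S ∧ t ∈ S ∧ ((a * s : Fˣ) : F) + ((b * t : Fˣ) : F) = 1

/-- The Steinberg subgroup `St_n(S)` of `(F^×/S)^{⊗n}`: generated by the pure tensors
`a₁S ⊗ ⋯ ⊗ aₙS` with `1 ∈ aᵢS + aⱼS` for some `i < j`.  The quotient is the Milnor
`K`-group `K^M_n(F)/S`. -/
noncomputable def SteinbergSubgroup (S : Subgroup Fˣ) (n : ℕ) :
    Submodule ℤ (TensorPowerModS S n) :=
  Submodule.span ℤ {x | ∃ a : Fin n → Fˣ,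
    (∃ i j : Fin n, i < j ∧ SteinbergRel S (a i) (a j)) ∧ x = pureTensorModS S a}

lemma pure_update_add (S : Subgroup Fˣ) {n : ℕ} (a : Fin n → Fˣ) (j : Fin n) (x y : Fˣ)
    (h : (QuotientGroup.mk (a j) : Fˣ ⧸ S) = QuotientGroup.mk (x * y)) :
    pureTensorModS S a =
      pureTensorModS S (Function.update a j x) + pureTensorModS S (Function.update a j y) := by
  classical
  set m : Fin n → Additive (Fˣ ⧸ S) := fun k => Additive.ofMul (QuotientGroup.mk (a k)) with hm
  have hupd : ∀ z : Fˣ,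
      (fun k => Additive.ofMul (QuotientGroup.mk ((Function.update a j z) k) : Fˣ ⧸ S)) =
        Function.update m j (Additive.ofMul (QuotientGroup.mk z)) := by
    intro z
    funext k
    by_cases hk : k = j
    · subst hk; simp
    · simp [Function.update_of_ne hk, hm]
  have hmj : m = Function.update m j
      (Additive.ofMul (QuotientGroup.mk x : Fˣ ⧸ S) + Additive.ofMul (QuotientGroup.mk y)) := by
    rw [← ofMul_mul, ← QuotientGroup.mk_mul, ← h]
    simp [hm]
  show PiTensorProduct.tprod ℤ m = _
  rw [hmj, MultilinearMap.map_update_add]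
  show _ = PiTensorProduct.tprod ℤ _ + PiTensorProduct.tprod ℤ _
  rw [hupd x, hupd y]

lemma pure_update_inv (S : Subgroup Fˣ) {n : ℕ} (a : Fin n → Fˣ) (j : Fin n) (x : Fˣ)
    (h : (QuotientGroup.mk (a j) : Fˣ ⧸ S) = QuotientGroup.mk x⁻¹) :
    pureTensorModS S a = (-1 : ℤ) • pureTensorModS S (Function.update a j x) := by
  classical
  set m : Fin n → Additive (Fˣ ⧸ S) := fun k => Additive.ofMul (QuotientGroup.mk (a k)) with hm
  have hupd :
      (fun k => Additive.ofMul (QuotientGroup.mk ((Function.update a j x) k) : Fˣ ⧸ S)) =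
        Function.update m j (Additive.ofMul (QuotientGroup.mk x)) := by
    funext k
    by_cases hk : k = j
    · subst hk; simp
    · simp [Function.update_of_ne hk, hm]
  have hmj : m = Function.update m j
      ((-1 : ℤ) • Additive.ofMul (QuotientGroup.mk x : Fˣ ⧸ S)) := by
    have : (-1 : ℤ) • Additive.ofMul (QuotientGroup.mk x : Fˣ ⧸ S) =
        Additive.ofMul (QuotientGroup.mk x⁻¹ : Fˣ ⧸ S) := by
      rw [neg_one_zsmul]; simp
    rw [this, ← h]
    simp [hm]
  show PiTensorProduct.tprod ℤ m = _
  rw [hmj, MultilinearMap.map_update_smul]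
  show _ = (-1 : ℤ) • PiTensorProduct.tprod ℤ _
  rw [hupd]

/-- Let `S ≤ F^×` and `a, b ∈ F^×` with `aS = -bS`.  Then
`bS = (1-a)(1-a⁻¹)⁻¹S` whenever `a ≠ 1`; consequently every pure tensor
`a₁S ⊗ ⋯ ⊗ aₙS` with `aᵢS = -aⱼS` for some `i < j` lies in the Steinberg subgroup
`St_n(S)`. -/
theorem statement8 (S : Subgroup Fˣ) :
    (∀ a b : Fˣ, (∃ s ∈ S, a * b⁻¹ = -s) → a ≠ 1 →
      ∃ s ∈ S, (b : F) = (1 - (a : F)) * (1 - (a : F)⁻¹)⁻¹ * ((s : Fˣ) : F)) ∧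
    (∀ (n : ℕ) (a : Fin n → Fˣ) (i j : Fin n), i < j →
      (∃ s ∈ S, a i * (a j)⁻¹ = -s) →
      pureTensorModS S a ∈ SteinbergSubgroup S n) := by
  constructor
  · rintro a b ⟨s, hs, heq⟩ ha1
    have ha : (a : F) ≠ 1 := fun h => ha1 (Units.ext h)
    have ha0 : (a : F) ≠ 0 := Units.ne_zero a
    have hs0 : (s : F) ≠ 0 := Units.ne_zero s
    have hv : (1 : F) - (a : F)⁻¹ ≠ 0 := by
      intro h
      exact ha (inv_eq_one.mp (sub_eq_zero.mp h).symm)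
    have hcoe : (a : F) * (b : F)⁻¹ = -(s : F) := by
      have := congrArg (Units.val) heq
      simpa using this
    refine ⟨s⁻¹, S.inv_mem hs, ?_⟩
    have hsinv : ((s⁻¹ : Fˣ) : F) = (s : F)⁻¹ := by simp
    have key : (1 - (a : F)) * (1 - (a : F)⁻¹)⁻¹ = -(a : F) := by
      rw [← div_eq_mul_inv, div_eq_iff hv]
      field_simp
      ring
    rw [hsinv, key]
    have hb0 : (b : F) ≠ 0 := Units.ne_zero b
    field_simp at hcoe ⊢
    linear_combination hcoe
  · rintro n a i j hij ⟨s, hs, heq⟩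
    classical
    have hijne : i ≠ j := ne_of_lt hij
    by_cases hc : a i = 1
    · have h0 : pureTensorModS S a = 0 := by
        apply MultilinearMap.map_coord_zero (i := i)
        simp [hc]
      rw [h0]; exact zero_mem _
    · set c : Fˣ := a i with hcdef
      have hc1 : (c : F) ≠ 1 := fun h => hc (Units.ext h)
      have hc0 : (c : F) ≠ 0 := Units.ne_zero c
      have hu : (1 : F) - (c : F) ≠ 0 := fun h => hc1 (sub_eq_zero.mp h).symm
      have hv : (1 : F) - (c : F)⁻¹ ≠ 0 := by
        intro h
        exact hc1 (inv_eq_one.mp (sub_eq_zero.mp h).symm)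
      obtain ⟨u, hu'⟩ : ∃ u : Fˣ, (u : F) = 1 - (c : F) := ⟨Units.mk0 _ hu, rfl⟩
      obtain ⟨v, hv'⟩ : ∃ v : Fˣ, (v : F) = 1 - (c : F)⁻¹ := ⟨Units.mk0 _ hv, rfl⟩
      have hv0 : (v : F) ≠ 0 := Units.ne_zero v
      have hneg : (-c : Fˣ) = u * v⁻¹ := by
        apply Units.ext
        rw [Units.val_neg, Units.val_mul, Units.val_inv_eq_inv_val, hu', hv',
          ← div_eq_mul_inv, eq_div_iff hv]
        field_simp
        ring
      have hcoe2 : (c : F) * ((a j : Fˣ) : F)⁻¹ = -(s : F) := by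
        have := congrArg (Units.val) heq
        simpa using this
      have haj0 : ((a j : Fˣ) : F) ≠ 0 := Units.ne_zero _
      have haj : a j = -c * s⁻¹ := by
        apply Units.ext
        rw [Units.val_mul, Units.val_neg, Units.val_inv_eq_inv_val]
        have hs0 : (s : F) ≠ 0 := Units.ne_zero s
        field_simp at hcoe2 ⊢
        linear_combination hcoe2
      have hmkaj : (QuotientGroup.mk (a j) : Fˣ ⧸ S) = QuotientGroup.mk (u * v⁻¹) := by
        rw [haj, ← hneg, QuotientGroup.mk_mul,
          (QuotientGroup.eq_one_iff (s⁻¹ : Fˣ)).mpr (S.inv_mem hs)]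
        exact congrArg QuotientGroup.mk (mul_one (-c))
      have step1 := pure_update_add S a j u v⁻¹ hmkaj
      have step2 : pureTensorModS S (Function.update a j v⁻¹) =
          (-1 : ℤ) • pureTensorModS S (Function.update a j v) := by
        have := pure_update_inv S (Function.update a j v⁻¹) j v (by simp)
        rwa [Function.update_idem] at this
      have step3 : pureTensorModS S (Function.update a j v) =
          (-1 : ℤ) • pureTensorModS S
            (Function.update (Function.update a j v) i c⁻¹) := by
        apply pure_update_inv
        rw [Function.update_of_ne hijne, inv_inv]
      have g1mem : pureTensorModS S (Function.update a j u) ∈ SteinbergSubgroup S n := by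
        apply Submodule.subset_span
        refine ⟨Function.update a j u, ⟨i, j, hij, ?_⟩, rfl⟩
        refine ⟨1, 1, one_mem _, one_mem _, ?_⟩
        rw [Function.update_of_ne hijne, Function.update_self]
        simp [hu', ← hcdef]
      have g2mem : pureTensorModS S (Function.update (Function.update a j v) i c⁻¹) ∈
          SteinbergSubgroup S n := by
        apply Submodule.subset_span
        refine ⟨_, ⟨i, j, hij, ?_⟩, rfl⟩
        refine ⟨1, 1, one_mem _, one_mem _, ?_⟩
        rw [Function.update_self, Function.update_of_ne hijne.symm, Function.update_self]
        simp [hv']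
      rw [step1, step2, step3]
      exact add_mem g1mem (Submodule.smul_mem _ _ (Submodule.smul_mem _ _ g2mem))
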